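/- For all real μ and λ, and for every ε > 0, there exists C_ε > 0 such that every φ ∈ D(G) lies in the domain of H_{μ,λ} and ‖H_{μ,λ} φ‖ ≤ ε ‖G φ‖ + C_ε ‖φ‖. -/

import Mathlib

/-!
Formalization of statements about the Gribov operator
`H_{λ″} = λ″ a*³a³ + μ a*a + iλ a*(a + a*)a` acting on the Bargmann space `E`.

The Bargmann space is modelled abstractly: a complex Hilbert space `E` together with a
Hilbert basis `(e n)_{n : ℕ}` (corresponding to `e_n(z) = zⁿ/√n!`).  Operators are
specified through their action on the basis / on basis coefficients, exactly as in the
paper: `G e_n = n(n-1)(n-2) e_n`,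
`H_{μ,λ} e_n = iλ(n-1)√n e_{n-1} + μ n e_n + iλ n √(n+1) e_{n+1}`.
-/

noncomputable section

open Filter Topology MeasureTheory
open scoped InnerProductSpace ComplexInnerProductSpace

/-- Eigenvalues of `G = a*³a³` : `λ_n = n(n-1)(n-2)`. -/
def gEig (n : ℕ) : ℝ := (n : ℝ) * ((n : ℝ) - 1) * ((n : ℝ) - 2)

/-- Basis coefficients of `H_{μ,λ} φ`, where `φ` has basis coefficients `c`:
`(H_{μ,λ} φ)_m = μ m c_m + iλ ( m √(m+1) c_{m+1} + (m-1) √m c_{m-1} )`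
(coming from `H_{μ,λ} e_n = iλ(n-1)√n e_{n-1} + μ n e_n + iλ n √(n+1) e_{n+1}`). -/
def hCoef (μ lam : ℝ) (c : ℕ → ℂ) (m : ℕ) : ℂ :=
  (μ : ℂ) * (m : ℂ) * c m +
    Complex.I * (lam : ℂ) *
      ((m : ℂ) * (Real.sqrt (m + 1) : ℂ) * c (m + 1) +
        ((m : ℂ) - 1) * (Real.sqrt m : ℂ) * c (m - 1))

lemma gribov_sqrt_add_le {x y : ℝ} (hx : 0 ≤ x) (hy : 0 ≤ y) :
    Real.sqrt (x + y) ≤ Real.sqrt x + Real.sqrt y := by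
  have h1 := Real.sq_sqrt hx
  have h2 := Real.sq_sqrt hy
  have h3 := Real.sqrt_nonneg x
  have h4 := Real.sqrt_nonneg y
  calc Real.sqrt (x + y) ≤ Real.sqrt ((Real.sqrt x + Real.sqrt y) ^ 2) :=
        Real.sqrt_le_sqrt (by nlinarith)
    _ = Real.sqrt x + Real.sqrt y := Real.sqrt_sq (by positivity)

lemma gribov_cube_bound (K δ : ℝ) (hK : 0 ≤ K) (hδ : 0 < δ) :
    ∃ C : ℝ, 0 < C ∧ ∀ n : ℕ, K * (n : ℝ) ^ 3 ≤ δ * gEig n ^ 2 + C := by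
  set N : ℕ := max 4 ⌈16 * K / δ⌉₊ with hN
  refine ⟨K * (N : ℝ) ^ 3 + 1, by positivity, fun n => ?_⟩
  rcases le_or_gt N n with h | h
  · have h4 : (4 : ℝ) ≤ (n : ℝ) := by
      have : (4 : ℕ) ≤ n := le_trans (le_max_left _ _) h
      exact_mod_cast this
    have h1 : (16 * K / δ : ℝ) ≤ (n : ℝ) := by
      refine le_trans (Nat.le_ceil _) ?_
      exact_mod_cast le_trans (le_max_right _ _) h
    have hKn : 16 * K ≤ δ * (n : ℝ) ^ 3 := by
      have h2 : (n : ℝ) ≤ (n : ℝ) ^ 3 := by nlinarith [sq_nonneg ((n : ℝ) - 1), h4]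
      have h3 := (div_le_iff₀ hδ).1 h1
      nlinarith [mul_le_mul_of_nonneg_left h2 hδ.le]
    have hg : (n : ℝ) ^ 3 ≤ 4 * gEig n := by
      have key : 0 ≤ (n : ℝ) * (3 * ((n : ℝ) - 2) ^ 2 - 4) := by
        refine mul_nonneg (by linarith) ?_
        nlinarith [sq_nonneg ((n : ℝ) - 2)]
      unfold gEig; nlinarith [key]
    have hg0 : 0 ≤ gEig n := by nlinarith
    have hmain : K * (n : ℝ) ^ 3 ≤ δ * gEig n ^ 2 := by
      have h6 : (n : ℝ) ^ 3 * (n : ℝ) ^ 3 ≤ (4 * gEig n) * (4 * gEig n) :=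
        mul_le_mul hg hg (by positivity) (by linarith)
      have h7 : 16 * K * (n : ℝ) ^ 3 ≤ δ * (n : ℝ) ^ 3 * (n : ℝ) ^ 3 := by
        have := mul_le_mul_of_nonneg_right hKn (by positivity : (0 : ℝ) ≤ (n : ℝ) ^ 3)
        nlinarith
      have h8 := mul_le_mul_of_nonneg_left h6 hδ.le
      nlinarith
    have hpos : (0 : ℝ) ≤ K * (N : ℝ) ^ 3 := by positivity
    linarith
  · have hn : (n : ℝ) ≤ (N : ℝ) := by exact_mod_cast h.le
    have hn0 : (0 : ℝ) ≤ (n : ℝ) := n.cast_nonneg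
    have : K * (n : ℝ) ^ 3 ≤ K * (N : ℝ) ^ 3 :=
      mul_le_mul_of_nonneg_left (pow_le_pow_left₀ hn0 hn 3) hK
    have hgn : 0 ≤ δ * gEig n ^ 2 := by positivity
    linarith

set_option maxHeartbeats 2000000

/-- For all real `μ`, `λ` and every `ε > 0` there is `C_ε > 0` such that
every `φ ∈ D(G)` lies in the domain of `H_{μ,λ}` and
`‖H_{μ,λ} φ‖ ≤ ε ‖G φ‖ + C_ε ‖φ‖`. -/
theorem gribov_H_relatively_bounded_by_G
    {E : Type} [NormedAddCommGroup E] [InnerProductSpace ℂ E] [CompleteSpace E]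
    (e : HilbertBasis ℕ ℂ E) (μ lam : ℝ) (G H : E →ₗ.[ℂ] E)
    (hGdom : ∀ φ : E, φ ∈ G.domain ↔ Summable fun n : ℕ => gEig n ^ 2 * ‖e.repr φ n‖ ^ 2)
    (hGact : ∀ (φ : G.domain) (n : ℕ), e.repr (G φ) n = (gEig n : ℂ) * e.repr (φ : E) n)
    (hHdom : ∀ φ : E,
      φ ∈ H.domain ↔ Summable fun m : ℕ => ‖hCoef μ lam (fun n => e.repr φ n) m‖ ^ 2)
    (hHact : ∀ (φ : H.domain) (m : ℕ),
      e.repr (H φ) m = hCoef μ lam (fun n => e.repr (φ : E) n) m) :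
    ∀ ε : ℝ, 0 < ε → ∃ C : ℝ, 0 < C ∧
      ∀ φ : G.domain, ∃ h : (φ : E) ∈ H.domain,
        ‖H ⟨(φ : E), h⟩‖ ≤ ε * ‖G φ‖ + C * ‖(φ : E)‖ := by
  intro ε hε
  have two_pos : 0 < (2 : ENNReal).toReal := by norm_num
  -- conversion between rpow and pow for exponent 2
  have memiff : ∀ f : ℕ → ℂ, Memℓp f 2 ↔ Summable fun m : ℕ => ‖f m‖ ^ 2 := by
    intro f
    rw [memℓp_gen_iff two_pos]
    norm_num [Real.rpow_two]
  have nsqlp : ∀ f : lp (fun _ : ℕ => ℂ) 2, ‖f‖ ^ 2 = ∑' m : ℕ, ‖f m‖ ^ 2 := by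
    intro f
    have := lp.norm_rpow_eq_tsum two_pos f
    norm_num [Real.rpow_two] at this
    exact this
  have nsq : ∀ ψ : E, ‖ψ‖ ^ 2 = ∑' n : ℕ, ‖e.repr ψ n‖ ^ 2 := by
    intro ψ
    rw [← nsqlp (e.repr ψ), e.repr.norm_map]
  set δ : ℝ := (ε / 3) ^ 2 with hδdef
  have hδ : 0 < δ := by positivity
  obtain ⟨Ca, hCa, hCa'⟩ := gribov_cube_bound (μ ^ 2) δ (sq_nonneg μ) hδ
  obtain ⟨Cb, hCb, hCb'⟩ := gribov_cube_bound (lam ^ 2) δ (sq_nonneg lam) hδ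
  obtain ⟨Cd0, hCd0, hCd0'⟩ := gribov_cube_bound (2 * lam ^ 2) δ (by positivity) hδ
  set Cd : ℝ := Cd0 + lam ^ 2 with hCddef
  have hCd : 0 < Cd := by positivity
  refine ⟨Real.sqrt Ca + Real.sqrt Cb + Real.sqrt Cd, by
    have := Real.sqrt_pos.2 hCa
    have := Real.sqrt_pos.2 hCb
    have := Real.sqrt_pos.2 hCd
    linarith, fun φ => ?_⟩
  set c : ℕ → ℂ := fun n => e.repr (φ : E) n with hc
  have hGsum : Summable fun n : ℕ => gEig n ^ 2 * ‖c n‖ ^ 2 := (hGdom _).1 φ.2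
  have hfsum : Summable fun n : ℕ => ‖c n‖ ^ 2 := by
    have := (memiff (e.repr (φ : E))).1 (e.repr (φ : E)).2
    exact this
  -- the three pieces
  set a : ℕ → ℂ := fun m => (μ : ℂ) * (m : ℂ) * c m with ha
  set b : ℕ → ℂ := fun m =>
    Complex.I * (lam : ℂ) * ((m : ℂ) * (Real.sqrt (m + 1) : ℂ) * c (m + 1)) with hb
  set d : ℕ → ℂ := fun m =>
    Complex.I * (lam : ℂ) * (((m : ℂ) - 1) * (Real.sqrt m : ℂ) * c (m - 1)) with hd
  have habd : ∀ m : ℕ, hCoef μ lam c m = a m + b m + d m := by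
    intro m; simp only [hCoef, ha, hb, hd]; ring
  -- norm computations
  have hna : ∀ m : ℕ, ‖a m‖ ^ 2 = μ ^ 2 * (m : ℝ) ^ 2 * ‖c m‖ ^ 2 := by
    intro m
    have h1 : ‖a m‖ = |μ| * ((m : ℝ) * ‖c m‖) := by
      simp only [ha, norm_mul, Complex.norm_real, Complex.norm_natCast, Real.norm_eq_abs]
      ring
    rw [h1, mul_pow, mul_pow, sq_abs]
    ring
  have hnb : ∀ m : ℕ, ‖b m‖ ^ 2 = lam ^ 2 * ((m : ℝ) ^ 2 * ((m : ℝ) + 1)) * ‖c (m + 1)‖ ^ 2 := by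
    intro m
    have h1 : ‖b m‖ = |lam| * ((m : ℝ) * Real.sqrt ((m : ℝ) + 1) * ‖c (m + 1)‖) := by
      simp only [hb, norm_mul, Complex.norm_real, Complex.norm_natCast, Complex.norm_I,
        Real.norm_eq_abs, abs_of_nonneg (Real.sqrt_nonneg ((m : ℝ) + 1))]
      ring
    rw [h1, mul_pow, mul_pow, mul_pow, sq_abs,
      Real.sq_sqrt (by positivity : (0 : ℝ) ≤ (m : ℝ) + 1)]
    ring
  have hnd : ∀ m : ℕ, ‖d (m + 1)‖ ^ 2 = lam ^ 2 * ((m : ℝ) ^ 2 * ((m : ℝ) + 1)) * ‖c m‖ ^ 2 := by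
    intro m
    have hidx : (m + 1) - 1 = m := rfl
    have hcast : ((m + 1 : ℕ) : ℂ) - 1 = ((m : ℝ) : ℂ) := by push_cast; ring
    have hcast2 : ((m + 1 : ℕ) : ℝ) = (m : ℝ) + 1 := by push_cast; ring
    have h1 : ‖d (m + 1)‖ = |lam| * (|(m : ℝ)| * Real.sqrt ((m : ℝ) + 1) * ‖c m‖) := by
      simp only [hd, hidx, hcast, hcast2, norm_mul, Complex.norm_real, Complex.norm_natCast,
        Complex.norm_I, Real.norm_eq_abs, abs_of_nonneg (Real.sqrt_nonneg ((m : ℝ) + 1))]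
      ring
    rw [h1, mul_pow, mul_pow, mul_pow, sq_abs, sq_abs,
      Real.sq_sqrt (by positivity : (0 : ℝ) ≤ (m : ℝ) + 1)]
    ring
  have hd0 : d 0 = 0 := by simp [hd]
  -- comparison sequences
  have hRsum : ∀ C : ℝ, Summable fun n : ℕ => (δ * gEig n ^ 2 + C) * ‖c n‖ ^ 2 := by
    intro C
    have h := (hGsum.mul_left δ).add (hfsum.mul_left C)
    refine h.congr fun n => ?_
    ring
  -- termwise bounds
  have hba : ∀ m : ℕ, ‖a m‖ ^ 2 ≤ (δ * gEig m ^ 2 + Ca) * ‖c m‖ ^ 2 := by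
    intro m
    rw [hna]
    have hcn : (0 : ℝ) ≤ ‖c m‖ ^ 2 := sq_nonneg _
    have h23 : (m : ℝ) ^ 2 ≤ (m : ℝ) ^ 3 := by
      rcases Nat.eq_zero_or_pos m with h | h
      · simp [h]
      · have : (1 : ℝ) ≤ (m : ℝ) := by exact_mod_cast h
        nlinarith
    have s1 := mul_le_mul_of_nonneg_right (mul_le_mul_of_nonneg_left h23 (sq_nonneg μ)) hcn
    have s2 := mul_le_mul_of_nonneg_right (hCa' m) hcn
    nlinarith [s1, s2]
  have hbb : ∀ m : ℕ, ‖b m‖ ^ 2 ≤ (δ * gEig (m + 1) ^ 2 + Cb) * ‖c (m + 1)‖ ^ 2 := by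
    intro m
    rw [hnb]
    have hcn : (0 : ℝ) ≤ ‖c (m + 1)‖ ^ 2 := sq_nonneg _
    have h1 : (m : ℝ) ^ 2 * ((m : ℝ) + 1) ≤ ((m : ℝ) + 1) ^ 3 := by
      nlinarith [Nat.cast_nonneg (α := ℝ) m]
    have h2 := hCb' (m + 1)
    rw [show ((m + 1 : ℕ) : ℝ) = (m : ℝ) + 1 by push_cast; ring] at h2
    have s1 := mul_le_mul_of_nonneg_right (mul_le_mul_of_nonneg_left h1 (sq_nonneg lam)) hcn
    have s2 := mul_le_mul_of_nonneg_right h2 hcn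
    nlinarith [s1, s2]
  have hbd : ∀ m : ℕ, ‖d (m + 1)‖ ^ 2 ≤ (δ * gEig m ^ 2 + Cd) * ‖c m‖ ^ 2 := by
    intro m
    rw [hnd, hCddef]
    have hcn : (0 : ℝ) ≤ ‖c m‖ ^ 2 := sq_nonneg _
    have h1 : (m : ℝ) ^ 2 * ((m : ℝ) + 1) ≤ 2 * (m : ℝ) ^ 3 + 1 := by
      rcases Nat.eq_zero_or_pos m with h | h
      · simp [h]
      · have : (1 : ℝ) ≤ (m : ℝ) := by exact_mod_cast h
        nlinarith
    have s1 := mul_le_mul_of_nonneg_right (mul_le_mul_of_nonneg_left h1 (sq_nonneg lam)) hcn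
    have s2 := mul_le_mul_of_nonneg_right (hCd0' m) hcn
    nlinarith [s1, s2, mul_nonneg (sq_nonneg lam) hcn]
  -- summability of the pieces
  have hsa : Summable fun m : ℕ => ‖a m‖ ^ 2 :=
    (hRsum Ca).of_nonneg_of_le (fun _ => sq_nonneg _) hba
  have hsbshift : Summable fun m : ℕ => (δ * gEig (m + 1) ^ 2 + Cb) * ‖c (m + 1)‖ ^ 2 :=
    (summable_nat_add_iff 1).2 (hRsum Cb)
  have hsb : Summable fun m : ℕ => ‖b m‖ ^ 2 :=
    hsbshift.of_nonneg_of_le (fun _ => sq_nonneg _) hbb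
  have hsdshift : Summable fun m : ℕ => ‖d (m + 1)‖ ^ 2 :=
    (hRsum Cd).of_nonneg_of_le (fun _ => sq_nonneg _) hbd
  have hsd : Summable fun m : ℕ => ‖d m‖ ^ 2 := (summable_nat_add_iff 1).1 hsdshift
  -- membership in the domain of H
  have hsum3 : Summable fun m : ℕ => ‖hCoef μ lam c m‖ ^ 2 := by
    refine (((hsa.add hsb).add hsd).mul_left 3).of_nonneg_of_le (fun _ => sq_nonneg _)
      fun m => ?_
    rw [habd]
    have h1 : ‖a m + b m + d m‖ ≤ ‖a m‖ + ‖b m‖ + ‖d m‖ := norm_add₃_le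
    nlinarith [norm_nonneg (a m + b m + d m), norm_nonneg (a m), norm_nonneg (b m),
      norm_nonneg (d m), sq_nonneg (‖a m‖ - ‖b m‖), sq_nonneg (‖a m‖ - ‖d m‖),
      sq_nonneg (‖b m‖ - ‖d m‖)]
  have hdom : (φ : E) ∈ H.domain := (hHdom _).2 hsum3
  refine ⟨hdom, ?_⟩
  -- lp elements
  set ψ : H.domain := ⟨(φ : E), hdom⟩ with hψ
  have hma : Memℓp a 2 := (memiff a).2 hsa
  have hmb : Memℓp b 2 := (memiff b).2 hsb
  have hmd : Memℓp d 2 := (memiff d).2 hsd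
  set lpA : lp (fun _ : ℕ => ℂ) 2 := ⟨a, hma⟩ with hlpA
  set lpB : lp (fun _ : ℕ => ℂ) 2 := ⟨b, hmb⟩ with hlpB
  set lpD : lp (fun _ : ℕ => ℂ) 2 := ⟨d, hmd⟩ with hlpD
  have hrepr : e.repr (H ψ) = lpA + lpB + lpD := by
    refine lp.ext (funext fun m => ?_)
    have h1 := hHact ψ m
    have h2 : (⇑(lpA + lpB + lpD) : ℕ → ℂ) m = a m + b m + d m := by
      simp [lp.coeFn_add, hlpA, hlpB, hlpD]
      rfl
    rw [h2, h1]
    exact habd m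
  -- norm identities
  have hGnorm : ‖G φ‖ ^ 2 = ∑' n : ℕ, gEig n ^ 2 * ‖c n‖ ^ 2 := by
    rw [nsq (G φ)]
    refine tsum_congr fun n => ?_
    rw [hGact φ n]
    simp only [norm_mul, Complex.norm_real, Real.norm_eq_abs]
    rw [mul_pow, sq_abs]
  have hφnorm : ‖(φ : E)‖ ^ 2 = ∑' n : ℕ, ‖c n‖ ^ 2 := nsq (φ : E)
  have hRtsum : ∀ C : ℝ,
      (∑' n : ℕ, (δ * gEig n ^ 2 + C) * ‖c n‖ ^ 2) = δ * ‖G φ‖ ^ 2 + C * ‖(φ : E)‖ ^ 2 := by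
    intro C
    calc (∑' n : ℕ, (δ * gEig n ^ 2 + C) * ‖c n‖ ^ 2)
        = ∑' n : ℕ, (δ * (gEig n ^ 2 * ‖c n‖ ^ 2) + C * ‖c n‖ ^ 2) :=
          tsum_congr fun n => by ring
      _ = δ * (∑' n : ℕ, gEig n ^ 2 * ‖c n‖ ^ 2) + C * (∑' n : ℕ, ‖c n‖ ^ 2) := by
          rw [Summable.tsum_add (hGsum.mul_left δ) (hfsum.mul_left C), tsum_mul_left, tsum_mul_left]
      _ = δ * ‖G φ‖ ^ 2 + C * ‖(φ : E)‖ ^ 2 := by rw [hGnorm, hφnorm]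
  -- tsum bounds
  have tsum_a : (∑' m : ℕ, ‖a m‖ ^ 2) ≤ δ * ‖G φ‖ ^ 2 + Ca * ‖(φ : E)‖ ^ 2 := by
    rw [← hRtsum Ca]
    exact hsa.tsum_le_tsum hba (hRsum Ca)
  have tsum_b : (∑' m : ℕ, ‖b m‖ ^ 2) ≤ δ * ‖G φ‖ ^ 2 + Cb * ‖(φ : E)‖ ^ 2 := by
    rw [← hRtsum Cb]
    refine le_trans (hsb.tsum_le_tsum hbb hsbshift) ?_
    refine hsbshift.tsum_le_tsum_of_inj (fun m => m + 1) (add_left_injective 1)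
      (fun k _ => mul_nonneg (add_nonneg (mul_nonneg hδ.le (sq_nonneg _)) hCb.le)
        (sq_nonneg _)) (fun m => le_rfl) (hRsum Cb)
  have tsum_d : (∑' m : ℕ, ‖d m‖ ^ 2) ≤ δ * ‖G φ‖ ^ 2 + Cd * ‖(φ : E)‖ ^ 2 := by
    have h0 : (∑' m : ℕ, ‖d m‖ ^ 2) = ∑' m : ℕ, ‖d (m + 1)‖ ^ 2 := by
      rw [hsd.tsum_eq_zero_add, hd0]
      simp
    rw [h0, ← hRtsum Cd]
    exact hsdshift.tsum_le_tsum hbd (hRsum Cd)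
  -- from squared bounds to norm bounds
  have key : ∀ (x C : ℝ), 0 ≤ x → 0 < C →
      x ^ 2 ≤ δ * ‖G φ‖ ^ 2 + C * ‖(φ : E)‖ ^ 2 →
      x ≤ ε / 3 * ‖G φ‖ + Real.sqrt C * ‖(φ : E)‖ := by
    intro x C hx hC hle
    have hy : 0 ≤ δ * ‖G φ‖ ^ 2 + C * ‖(φ : E)‖ ^ 2 :=
      add_nonneg (mul_nonneg hδ.le (sq_nonneg _)) (mul_nonneg hC.le (sq_nonneg _))
    have h2 : x ≤ Real.sqrt (δ * ‖G φ‖ ^ 2 + C * ‖(φ : E)‖ ^ 2) := (Real.le_sqrt hx hy).2 hle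
    have h3 := gribov_sqrt_add_le (mul_nonneg hδ.le (sq_nonneg ‖G φ‖))
      (mul_nonneg hC.le (sq_nonneg ‖(φ : E)‖))
    have hsδ : Real.sqrt δ = ε / 3 := by
      rw [hδdef]
      exact Real.sqrt_sq (by positivity)
    rw [Real.sqrt_mul hδ.le, Real.sqrt_mul hC.le, Real.sqrt_sq (norm_nonneg _),
      Real.sqrt_sq (norm_nonneg _), hsδ] at h3
    linarith
  have hnormA : ‖lpA‖ ^ 2 = ∑' m : ℕ, ‖a m‖ ^ 2 := nsqlp lpA
  have hnormB : ‖lpB‖ ^ 2 = ∑' m : ℕ, ‖b m‖ ^ 2 := nsqlp lpB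
  have hnormD : ‖lpD‖ ^ 2 = ∑' m : ℕ, ‖d m‖ ^ 2 := nsqlp lpD
  have bA : ‖lpA‖ ≤ ε / 3 * ‖G φ‖ + Real.sqrt Ca * ‖(φ : E)‖ :=
    key _ Ca (norm_nonneg _) hCa (by rw [hnormA]; exact tsum_a)
  have bB : ‖lpB‖ ≤ ε / 3 * ‖G φ‖ + Real.sqrt Cb * ‖(φ : E)‖ :=
    key _ Cb (norm_nonneg _) hCb (by rw [hnormB]; exact tsum_b)
  have bD : ‖lpD‖ ≤ ε / 3 * ‖G φ‖ + Real.sqrt Cd * ‖(φ : E)‖ :=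
    key _ Cd (norm_nonneg _) hCd (by rw [hnormD]; exact tsum_d)
  have htri : ‖(H ψ : E)‖ ≤ ‖lpA‖ + ‖lpB‖ + ‖lpD‖ := by
    rw [show ‖(H ψ : E)‖ = ‖e.repr (H ψ)‖ from (e.repr.norm_map _).symm, hrepr]
    exact norm_add₃_le
  have : ‖(H ψ : E)‖ ≤ ε * ‖G φ‖ + (Real.sqrt Ca + Real.sqrt Cb + Real.sqrt Cd) * ‖(φ : E)‖ := by
    nlinarith [htri, bA, bB, bD]
  exact this
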